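/- The path matrix of the hypercube graph Q_p has eigenvalues p(2^p - 1) with multiplicity 1 and -p with multiplicity 2^p - 1, and its path energy is 2p(2^p - 1). -/

import Mathlib

open Matrix in
lemma hyp_quad (p : ℕ) (P : Matrix (Fin (2 ^ p)) (Fin (2 ^ p)) ℝ)
    (hdiag : ∀ i, P i i = 0)
    (hoff : ∀ i j, i ≠ j → P i j = (p : ℝ)) :
    P * P = ((p : ℝ) * ((2 : ℝ) ^ p - 2)) • P + ((p : ℝ) ^ 2 * ((2 : ℝ) ^ p - 1)) • 1 := by
  have hcast : ((2 ^ p : ℕ) : ℝ) = (2 : ℝ) ^ p := by push_cast; ring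
  ext i j
  rcases eq_or_ne i j with rfl | hij
  · rw [Matrix.mul_apply, ← Finset.add_sum_erase _ _ (Finset.mem_univ i)]
    rw [Finset.sum_congr rfl (fun k hk => by
      rw [hoff i k (Ne.symm (Finset.ne_of_mem_erase hk)),
        hoff k i (Finset.ne_of_mem_erase hk)])]
    simp [hdiag, Finset.card_erase_of_mem, Finset.card_univ]
    ring
  · have hjmem : j ∈ Finset.univ.erase i := Finset.mem_erase.2 ⟨Ne.symm hij, Finset.mem_univ j⟩
    have hcard : (((Finset.univ : Finset (Fin (2 ^ p))).erase i).erase j).card = 2 ^ p - 2 := by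
      rw [Finset.card_erase_of_mem hjmem, Finset.card_erase_of_mem (Finset.mem_univ i),
        Finset.card_univ, Fintype.card_fin]
      omega
    have h2 : 2 ≤ 2 ^ p := by
      have h := Fintype.one_lt_card (α := Fin (2 ^ p)) (h := ⟨i, j, hij⟩)
      rw [Fintype.card_fin] at h; omega
    rw [Matrix.mul_apply, ← Finset.add_sum_erase _ _ (Finset.mem_univ i),
      ← Finset.add_sum_erase _ _ hjmem]
    rw [Finset.sum_congr rfl (fun k hk => by
      have hki : k ≠ i := Finset.ne_of_mem_erase (Finset.mem_of_mem_erase hk)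
      have hkj : k ≠ j := Finset.ne_of_mem_erase hk
      rw [hoff i k (Ne.symm hki), hoff k j hkj])]
    rw [Finset.sum_const, hcard]
    simp [hdiag i, hdiag j, Matrix.one_apply, hij, hoff i j hij, Nat.cast_sub h2, hcast]
    ring

open Matrix in
lemma hyp_eig (p : ℕ) (P : Matrix (Fin (2 ^ p)) (Fin (2 ^ p)) ℝ) (hP : P.IsHermitian)
    (hdiag : ∀ i, P i i = 0)
    (hoff : ∀ i j, i ≠ j → P i j = (p : ℝ)) (i : Fin (2 ^ p)) :
    hP.eigenvalues i = -(p : ℝ) ∨ hP.eigenvalues i = (p : ℝ) * ((2 : ℝ) ^ p - 1) := by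
  set μ := hP.eigenvalues i with hμ
  have hv := hP.mulVec_eigenvectorBasis i
  set v := ⇑(hP.eigenvectorBasis i) with hvdef
  have hvne : v ≠ 0 := by
    intro h
    have : hP.eigenvectorBasis i = 0 := by
      apply PiLp.ext; intro j; exact congrFun h j
    exact hP.eigenvectorBasis.orthonormal.ne_zero i this
  have h1 : (P * P) *ᵥ v = (μ * μ) • v := by
    rw [← Matrix.mulVec_mulVec, hv, Matrix.mulVec_smul, hv, smul_smul]
  have h2 : (P * P) *ᵥ v
      = ((p : ℝ) * ((2 : ℝ) ^ p - 2) * μ + (p : ℝ) ^ 2 * ((2 : ℝ) ^ p - 1)) • v := by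
    rw [hyp_quad p P hdiag hoff, Matrix.add_mulVec, Matrix.smul_mulVec,
      Matrix.smul_mulVec, Matrix.one_mulVec, hv, smul_smul, add_smul]
  have h3 : (μ * μ - ((p : ℝ) * ((2 : ℝ) ^ p - 2) * μ + (p : ℝ) ^ 2 * ((2 : ℝ) ^ p - 1))) • v
      = 0 := by
    rw [sub_smul, ← h1, ← h2, sub_self]
  rcases smul_eq_zero.mp h3 with h | h
  · have : (μ + (p : ℝ)) * (μ - (p : ℝ) * ((2 : ℝ) ^ p - 1)) = 0 := by
      rw [← h]; ring
    rcases mul_eq_zero.mp this with h' | h'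
    · left; linarith
    · right; linarith
  · exact absurd h hvne

lemma hyp_trace (p : ℕ) (P : Matrix (Fin (2 ^ p)) (Fin (2 ^ p)) ℝ) (hP : P.IsHermitian)
    (hdiag : ∀ i, P i i = 0) : ∑ i, hP.eigenvalues i = 0 := by
  have ht : Matrix.trace P = ∑ i, hP.eigenvalues i := by
    conv_lhs => rw [hP.spectral_theorem]
    rw [Unitary.conjStarAlgAut_apply, Matrix.trace_mul_cycle, (Matrix.mem_unitaryGroup_iff').mp (hP.eigenvectorUnitary).2,
      one_mul, Matrix.trace_diagonal]
    simp
  rw [← ht, Matrix.trace]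
  simp [Matrix.diag, hdiag]

theorem path_spectrum_hypercube (p : ℕ)
    (P : Matrix (Fin (2 ^ p)) (Fin (2 ^ p)) ℝ) (hP : P.IsHermitian)
    (hdiag : ∀ i, P i i = 0)
    (hoff : ∀ i j, i ≠ j → P i j = (p : ℝ)) :
    Finset.univ.val.map hP.eigenvalues =
      ((p : ℝ) * ((2 : ℝ) ^ p - 1)) ::ₘ
        Multiset.replicate (2 ^ p - 1) (-(p : ℝ)) ∧
    ∑ i, |hP.eigenvalues i| = 2 * (p : ℝ) * ((2 : ℝ) ^ p - 1) := by
  have hdich := hyp_eig p P hP hdiag hoff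
  have htr := hyp_trace p P hP hdiag
  set f := hP.eigenvalues with hf
  set a : ℝ := (p : ℝ) * ((2 : ℝ) ^ p - 1) with ha
  have hn1 : 1 ≤ 2 ^ p := Nat.one_le_two_pow
  have hcastn : ((2 ^ p : ℕ) : ℝ) = (2 : ℝ) ^ p := by push_cast; ring
  have hmul : Finset.univ.val.map f = a ::ₘ Multiset.replicate (2 ^ p - 1) (-(p : ℝ)) := by
    rcases Nat.eq_zero_or_pos p with rfl | hp
    · have h0 : ∀ i, f i = 0 := fun i => by
        rcases hdich i with h | h
        · simpa using h
        · rw [h, ha]; norm_num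
      have : (Finset.univ : Finset (Fin (2 ^ 0))) = {0} := by decide
      rw [this]
      simp [h0, ha]
    · -- p ≥ 1
      set S := Finset.univ.filter (fun i => f i = a) with hS
      set T := Finset.univ.filter (fun i => ¬ f i = a) with hT
      have hTval : ∀ i ∈ T, f i = -(p : ℝ) := by
        intro i hi
        rcases hdich i with h | h
        · exact h
        · exact absurd h (Finset.mem_filter.mp hi).2
      have hsum : ∑ i ∈ S, f i + ∑ i ∈ T, f i = 0 := by
        rw [Finset.sum_filter_add_sum_filter_not]; exact htr
      have hSsum : ∑ i ∈ S, f i = (S.card : ℝ) * a := by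
        rw [Finset.sum_congr rfl (fun i hi => (Finset.mem_filter.mp hi).2),
          Finset.sum_const, nsmul_eq_mul]
      have hTsum : ∑ i ∈ T, f i = (T.card : ℝ) * (-(p : ℝ)) := by
        rw [Finset.sum_congr rfl hTval, Finset.sum_const, nsmul_eq_mul]
      have hcards : S.card + T.card = 2 ^ p := by
        rw [hS, hT, Finset.card_filter_add_card_filter_not, Finset.card_univ,
          Fintype.card_fin]
      have hcardsR : (S.card : ℝ) + (T.card : ℝ) = (2 : ℝ) ^ p := by
        rw [← Nat.cast_add, hcards, hcastn]
      have hpne : (p : ℝ) ≠ 0 := by positivity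
      have hNne : (2 : ℝ) ^ p ≠ 0 := by positivity
      have hk : S.card = 1 := by
        have h1 : (S.card : ℝ) * a = (T.card : ℝ) * (p : ℝ) := by
          rw [hSsum, hTsum] at hsum; linarith
        have h2 : (S.card : ℝ) * ((2 : ℝ) ^ p - 1) = (T.card : ℝ) := by
          rw [ha] at h1
          have := mul_left_cancel₀ hpne (show (p : ℝ) * ((S.card : ℝ) * ((2:ℝ)^p - 1))
            = (p : ℝ) * (T.card : ℝ) by ring_nf; ring_nf at h1; linarith)
          exact this
        have h3 : (S.card : ℝ) * (2 : ℝ) ^ p = (2 : ℝ) ^ p := by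
          have : (T.card : ℝ) = (2 : ℝ) ^ p - (S.card : ℝ) := by linarith
          rw [this] at h2; ring_nf at h2 ⊢; linarith
        have h4 : (S.card : ℝ) = 1 :=
          mul_right_cancel₀ hNne (h3.trans (one_mul ((2 : ℝ) ^ p)).symm)
        exact_mod_cast h4
      obtain ⟨i0, hi0⟩ := Finset.card_eq_one.mp hk
      have hfi0 : f i0 = a := by
        have : i0 ∈ S := hi0 ▸ Finset.mem_singleton_self i0
        exact (Finset.mem_filter.mp this).2
      have hrest : ∀ j, j ≠ i0 → f j = -(p : ℝ) := by
        intro j hj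
        rcases hdich j with h | h
        · exact h
        · exfalso
          have : j ∈ S := Finset.mem_filter.2 ⟨Finset.mem_univ j, h⟩
          rw [hi0, Finset.mem_singleton] at this
          exact hj this
      have hu : (Finset.univ : Finset (Fin (2 ^ p))).val
          = i0 ::ₘ (Finset.univ.erase i0).val := by
        rw [Finset.erase_val]
        exact (Multiset.cons_erase (Finset.mem_univ i0)).symm
      rw [hu, Multiset.map_cons, hfi0]
      congr 1
      refine Multiset.eq_replicate.2 ⟨?_, ?_⟩
      · rw [Multiset.card_map, ← Finset.card_def, Finset.card_erase_of_mem (Finset.mem_univ i0),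
          Finset.card_univ, Fintype.card_fin]
      · intro b hb
        obtain ⟨j, hj, rfl⟩ := Multiset.mem_map.mp hb
        exact hrest j (Finset.mem_erase.mp (Finset.mem_val.mp hj)).1
  refine ⟨hmul, ?_⟩
  have hstep : ∑ i, |f i| = ((Finset.univ.val.map f).map (fun x => |x|)).sum := by
    rw [Multiset.map_map]; rfl
  have hN1 : (1 : ℝ) ≤ (2 : ℝ) ^ p := one_le_pow₀ (by norm_num)
  have hanneg : 0 ≤ a := by
    rw [ha]; have : (0:ℝ) ≤ (p:ℝ) := Nat.cast_nonneg p; nlinarith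
  rw [hstep, hmul]
  simp only [Multiset.map_cons, Multiset.map_replicate, Multiset.sum_cons,
    Multiset.sum_replicate, abs_neg, abs_of_nonneg hanneg, nsmul_eq_mul]
  rw [abs_of_nonneg (show (0 : ℝ) ≤ (p : ℝ) from Nat.cast_nonneg p), Nat.cast_sub hn1, hcastn]
  rw [ha]; push_cast; ring
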